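/- Given a non-normal derivation Δ in a system of grounding Σ and a topmost maximal cut-segment (tmcs) σ¹ of Δ, suppose there is a cut-segment σ* in Δ with μ(σ*) = μ(σ¹) such that the lower edge of σ¹ is side-connected either with an occurrence in σ* or with a formula occurrence in Δ standing below the lower edge of σ*; then there is a tmcs σ² of Δ disjoint from σ¹. Moreover, if σ¹, σ², ..., σⁿ is a sequence of pairwise disjoint tmcs of Δ such that for every i < n the segment σ^{i+1} stands to σ^i in the above relation, and there is a cut-segment σ** standing to σⁿ in the above relation, then there is a tmcs σ^{n+1} of Δ disjoint from each σ^i (1 ≤ i ≤ n). -/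

import Mathlib

/-!  A formalization of d'Aragona's systems of grounding (Prawitz's theory of grounds).

* `LTerm`, `LFormula` : terms and formulas of the first-order background language `L`
  (with an absurdity constant `bot`).
* `GTerm` : typed terms of the (enriched, possibly expanded) Gentzen language of grounding:
  individual constants `konst i` naming closed atomic derivations, typed ground-variables
  `xi α i` (ξ^α_i), applied functional variables `fh α x i t` (h^α_{x,i}(t)) and
  `ff α i T` (f^α_i(T)), the primitive operational symbols `andI, orI, impI, allI, exI`,
  the non-primitive ones `andE, orE, impE, allE, exE, botE`, and (for expansions by further
  non-primitive operational symbols) `op i` together with application `app`.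
* `GForm` : formulas of the enriched language: `gr T α` ("T : α", i.e. Gr(T,α)),
  `equiv T U` ("T ≡ U"), `botG` (⊥^G) and the logical constants ×, +, ⊃, Π, 𝔈
  (`conj, disj, impl, pi, exi`), quantifying over `GVar`s (individual, typed, functional).
* `Valid base R Γ t` : the tree `t` is a correct derivation, from open assumptions in `Γ`,
  in the system of grounding determined by the atomic base (represented by the conclusion
  assignment `base : ℕ → LFormula` for the constants `konst i`) and by the set `R` of
  characteristic rules (rewrite equations for the additional non-primitive symbols).
  With `R = ∅` this is exactly the system GG of d'Aragona.
* `Deriv base R Γ A` : derivability in the system; `Deriv base ∅ Γ A` is `Γ ⊢_GG A`.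
-/

namespace Grounding

noncomputable section
open Classical

/-! ### The background language L -/

/-- Terms of the first-order background language. -/
inductive LTerm : Type
  | var : ℕ → LTerm
  | func : ℕ → List LTerm → LTerm

/-- `x` occurs (free) in the background term `t`. -/
inductive LTerm.FVar : ℕ → LTerm → Prop
  | var (x : ℕ) : LTerm.FVar x (.var x)
  | func {x f : ℕ} {args : List LTerm} {t : LTerm} :
      t ∈ args → LTerm.FVar x t → LTerm.FVar x (.func f args)

/-- The set of variables of a background term. -/
def LTerm.fv (t : LTerm) : Set ℕ := {x | LTerm.FVar x t}

/-- Substitution `t[u/x]` in background terms. -/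
def LTerm.subst : LTerm → ℕ → LTerm → LTerm
  | .var y, x, u => if y = x then u else .var y
  | .func f args, x, u => .func f (args.attach.map fun a => a.1.subst x u)
termination_by t _ _ => sizeOf t
decreasing_by
  have := List.sizeOf_lt_of_mem a.2
  simp only [LTerm.func.sizeOf_spec]
  omega

/-- Formulas of the first-order background language, with absurdity constant `bot`. -/
inductive LFormula : Type
  | atom : ℕ → List LTerm → LFormula
  | bot : LFormula
  | and : LFormula → LFormula → LFormula
  | or : LFormula → LFormula → LFormula
  | imp : LFormula → LFormula → LFormula
  | all : ℕ → LFormula → LFormula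
  | ex : ℕ → LFormula → LFormula

/-- Free variables of a background formula. -/
def LFormula.fv : LFormula → Set ℕ
  | .atom _ args => {x | ∃ t ∈ args, x ∈ t.fv}
  | .bot => ∅
  | .and a b => a.fv ∪ b.fv
  | .or a b => a.fv ∪ b.fv
  | .imp a b => a.fv ∪ b.fv
  | .all y a => a.fv \ {y}
  | .ex y a => a.fv \ {y}

/-- Substitution `α[t/x]` in background formulas (no capture-renaming; use `freeFor`). -/
def LFormula.subst : LFormula → ℕ → LTerm → LFormula
  | .atom r args, x, t => .atom r (args.map fun u => u.subst x t)
  | .bot, _, _ => .bot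
  | .and a b, x, t => .and (a.subst x t) (b.subst x t)
  | .or a b, x, t => .or (a.subst x t) (b.subst x t)
  | .imp a b, x, t => .imp (a.subst x t) (b.subst x t)
  | .all y a, x, t => if y = x then .all y a else .all y (a.subst x t)
  | .ex y a, x, t => if y = x then .ex y a else .ex y (a.subst x t)

/-- `t` is free for `x` in `α`. -/
def LTerm.freeFor (t : LTerm) (x : ℕ) : LFormula → Prop
  | .atom _ _ => True
  | .bot => True
  | .and a b => t.freeFor x a ∧ t.freeFor x b
  | .or a b => t.freeFor x a ∧ t.freeFor x b
  | .imp a b => t.freeFor x a ∧ t.freeFor x b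
  | .all y a => (x = y ∨ x ∉ a.fv) ∨ (y ∉ t.fv ∧ t.freeFor x a)
  | .ex y a => (x = y ∨ x ∉ a.fv) ∨ (y ∉ t.fv ∧ t.freeFor x a)

/-- The standard logical-complexity measure `k¹` of a background formula. -/
def LFormula.compl : LFormula → ℕ
  | .atom _ _ => 0
  | .bot => 0
  | .and a b => max a.compl b.compl + 1
  | .or a b => max a.compl b.compl + 1
  | .imp a b => max a.compl b.compl + 1
  | .all _ a => a.compl + 1
  | .ex _ a => a.compl + 1

/-! ### Terms of the (enriched, possibly expanded) language of grounding -/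

/-- Typed terms of the language of grounding. -/
inductive GTerm : Type
  | konst : ℕ → GTerm                                -- δ_i, naming closed atomic derivations
  | xi : LFormula → ℕ → GTerm                        -- typed ground-variables ξ^α_i
  | fh : LFormula → ℕ → ℕ → LTerm → GTerm            -- applied functional variables h^α_{x,i}(t)
  | ff : LFormula → ℕ → GTerm → GTerm                -- applied functional variables f^α_i(T)
  | op : ℕ → GTerm                                   -- additional non-primitive operational symbols
  | app : GTerm → GTerm → GTerm                      -- application (for the additional symbols)
  | andI : GTerm → GTerm → GTerm                     -- ∧I(T,U)
  | orI : Bool → LFormula → GTerm → GTerm            -- ∨I[α_i ▷ α₁∨α₂]; `true` = left injection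
  | impI : LFormula → ℕ → GTerm → GTerm              -- →I ξ^α_i (T), binding ξ^α_i
  | allI : ℕ → GTerm → GTerm                         -- ∀I x (T), binding x
  | exI : ℕ → LTerm → LFormula → GTerm → GTerm       -- ∃I[α(t/x) ▷ ∃x α](T)
  | andE : Bool → GTerm → GTerm                      -- ∧E,i(T), `true` = first projection
  | orE : LFormula → LFormula → ℕ → ℕ → GTerm → GTerm → GTerm → GTerm
      -- ∨E ξ^α_i ξ^β_j (T,U,Z), binding ξ^α_i in U and ξ^β_j in Z
  | impE : GTerm → GTerm → GTerm                     -- →E(T,U)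
  | allE : LTerm → GTerm → GTerm                     -- ∀E[∀xα ▷ α(t/x)](T)
  | exE : ℕ → LFormula → ℕ → GTerm → GTerm → GTerm   -- ∃E x ξ^{α}_j (T,U), binding x, ξ^α_j in U
  | botE : LFormula → GTerm → GTerm                  -- ⊥_α(T)

/-- Variables of the enriched language: individual, typed and functional. -/
inductive GVar : Type
  | ind : ℕ → GVar
  | xi : LFormula → ℕ → GVar
  | fh : LFormula → ℕ → ℕ → GVar
  | ff : LFormula → ℕ → GVar

/-- Free variables (of all three kinds) of a grounding term. -/
def GTerm.fvar : GTerm → Set GVar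
  | .konst _ => ∅
  | .xi γ j => {GVar.xi γ j} ∪ (GVar.ind '' γ.fv)
  | .fh γ y j t => {GVar.fh γ y j} ∪ (GVar.ind '' (t.fv ∪ (γ.fv \ {y})))
  | .ff γ j T => {GVar.ff γ j} ∪ (GVar.ind '' γ.fv) ∪ T.fvar
  | .op _ => ∅
  | .app T U => T.fvar ∪ U.fvar
  | .andI T U => T.fvar ∪ U.fvar
  | .orI _ γ T => (GVar.ind '' γ.fv) ∪ T.fvar
  | .impI γ j T => (GVar.ind '' γ.fv) ∪ (T.fvar \ {GVar.xi γ j})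
  | .allI y T => T.fvar \ {GVar.ind y}
  | .exI y t γ T => (GVar.ind '' (t.fv ∪ (γ.fv \ {y}))) ∪ T.fvar
  | .andE _ T => T.fvar
  | .orE γ δ i j T V W => T.fvar ∪ (V.fvar \ {GVar.xi γ i}) ∪ (W.fvar \ {GVar.xi δ j})
  | .impE T U => T.fvar ∪ U.fvar
  | .allE t T => (GVar.ind '' t.fv) ∪ T.fvar
  | .exE y γ j T U => T.fvar ∪ ((U.fvar \ {GVar.xi γ j}) \ {GVar.ind y})
  | .botE γ T => (GVar.ind '' γ.fv) ∪ T.fvar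

/-- `v` is a functional variable. -/
def GVar.isFun : GVar → Prop
  | .fh _ _ _ => True
  | .ff _ _ => True
  | _ => False

/-- The term contains no (free or applied) functional variables. -/
def GTerm.noFunVar (T : GTerm) : Prop := ∀ v ∈ T.fvar, ¬ v.isFun

/-- `T` is a term of the basic (non-enriched) language of grounding `Gen`
(no functional variables, no additional operational symbols). -/
def GTerm.isGen : GTerm → Prop
  | .konst _ => True
  | .xi _ _ => True
  | .fh _ _ _ _ => False
  | .ff _ _ _ => False
  | .op _ => False
  | .app _ _ => False
  | .andI T U => T.isGen ∧ U.isGen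
  | .orI _ _ T => T.isGen
  | .impI _ _ T => T.isGen
  | .allI _ T => T.isGen
  | .exI _ _ _ T => T.isGen
  | .andE _ T => T.isGen
  | .orE _ _ _ _ T U Z => T.isGen ∧ U.isGen ∧ Z.isGen
  | .impE T U => T.isGen ∧ U.isGen
  | .allE _ T => T.isGen
  | .exE _ _ _ T U => T.isGen ∧ U.isGen
  | .botE _ T => T.isGen

/-- Substitution of the individual variable `x` by the background term `u` in a grounding term. -/
def GTerm.substInd (x : ℕ) (u : LTerm) : GTerm → GTerm
  | .konst i => .konst i
  | .xi γ j => .xi (γ.subst x u) j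
  | .fh γ y j t => .fh (if y = x then γ else γ.subst x u) y j (t.subst x u)
  | .ff γ j T => .ff (γ.subst x u) j (T.substInd x u)
  | .op i => .op i
  | .app T U => .app (T.substInd x u) (U.substInd x u)
  | .andI T U => .andI (T.substInd x u) (U.substInd x u)
  | .orI b γ T => .orI b (γ.subst x u) (T.substInd x u)
  | .impI γ j T => .impI (γ.subst x u) j (T.substInd x u)
  | .allI y T => if y = x then .allI y T else .allI y (T.substInd x u)
  | .exI y t γ T => .exI y (t.subst x u) (if y = x then γ else γ.subst x u) (T.substInd x u)
  | .andE b T => .andE b (T.substInd x u)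
  | .orE γ δ i j T V W =>
      .orE (γ.subst x u) (δ.subst x u) i j (T.substInd x u) (V.substInd x u) (W.substInd x u)
  | .impE T U => .impE (T.substInd x u) (U.substInd x u)
  | .allE t T => .allE (t.subst x u) (T.substInd x u)
  | .exE y γ j T U =>
      .exE y (if y = x then γ else γ.subst x u) j (T.substInd x u)
        (if y = x then U else U.substInd x u)
  | .botE γ T => .botE (γ.subst x u) (T.substInd x u)

/-- Substitution of the typed variable ξ^α_i by the term `W` in a grounding term. -/
def GTerm.substXi : GTerm → LFormula → ℕ → GTerm → GTerm
  | .konst k, _, _, _ => .konst k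
  | .xi γ j, α, i, W => if γ = α ∧ j = i then W else .xi γ j
  | .fh γ y j t, _, _, _ => .fh γ y j t
  | .ff γ j T, α, i, W => .ff γ j (T.substXi α i W)
  | .op k, _, _, _ => .op k
  | .app T U, α, i, W => .app (T.substXi α i W) (U.substXi α i W)
  | .andI T U, α, i, W => .andI (T.substXi α i W) (U.substXi α i W)
  | .orI b γ T, α, i, W => .orI b γ (T.substXi α i W)
  | .impI γ j T, α, i, W => if γ = α ∧ j = i then .impI γ j T else .impI γ j (T.substXi α i W)
  | .allI y T, α, i, W => .allI y (T.substXi α i W)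
  | .exI y t γ T, α, i, W => .exI y t γ (T.substXi α i W)
  | .andE b T, α, i, W => .andE b (T.substXi α i W)
  | .orE γ δ k l T V Z, α, i, W =>
      .orE γ δ k l (T.substXi α i W)
        (if γ = α ∧ k = i then V else V.substXi α i W)
        (if δ = α ∧ l = i then Z else Z.substXi α i W)
  | .impE T U, α, i, W => .impE (T.substXi α i W) (U.substXi α i W)
  | .allE t T, α, i, W => .allE t (T.substXi α i W)
  | .exE y γ j T U, α, i, W =>
      .exE y γ j (T.substXi α i W) (if γ = α ∧ j = i then U else U.substXi α i W)
  | .botE γ T, α, i, W => .botE γ (T.substXi α i W)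

/-- Substitution of the functional variable h^β_{x,m} by the term `U`
(occurrences `h^β_{x,m}(t)` become `U[t/x]`). -/
def GTerm.substFH : GTerm → LFormula → ℕ → ℕ → GTerm → GTerm
  | .konst i, _, _, _, _ => .konst i
  | .xi γ j, _, _, _, _ => .xi γ j
  | .fh γ y j t, β, x, m, U => if γ = β ∧ y = x ∧ j = m then U.substInd x t else .fh γ y j t
  | .ff γ j T, β, x, m, U => .ff γ j (T.substFH β x m U)
  | .op i, _, _, _, _ => .op i
  | .app T V, β, x, m, U => .app (T.substFH β x m U) (V.substFH β x m U)
  | .andI T V, β, x, m, U => .andI (T.substFH β x m U) (V.substFH β x m U)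
  | .orI b γ T, β, x, m, U => .orI b γ (T.substFH β x m U)
  | .impI γ j T, β, x, m, U => .impI γ j (T.substFH β x m U)
  | .allI y T, β, x, m, U => .allI y (T.substFH β x m U)
  | .exI y t γ T, β, x, m, U => .exI y t γ (T.substFH β x m U)
  | .andE b T, β, x, m, U => .andE b (T.substFH β x m U)
  | .orE γ δ k l T V Z, β, x, m, U =>
      .orE γ δ k l (T.substFH β x m U) (V.substFH β x m U) (Z.substFH β x m U)
  | .impE T V, β, x, m, U => .impE (T.substFH β x m U) (V.substFH β x m U)
  | .allE t T, β, x, m, U => .allE t (T.substFH β x m U)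
  | .exE y γ j T V, β, x, m, U => .exE y γ j (T.substFH β x m U) (V.substFH β x m U)
  | .botE γ T, β, x, m, U => .botE γ (T.substFH β x m U)

/-- Substitution of the functional variable f^β_m by the term `U`
(whole applications `f^β_m(Z)` become `U`). -/
def GTerm.substFF : GTerm → LFormula → ℕ → GTerm → GTerm
  | .konst i, _, _, _ => .konst i
  | .xi γ j, _, _, _ => .xi γ j
  | .fh γ y j t, _, _, _ => .fh γ y j t
  | .ff γ j T, β, m, U => if γ = β ∧ j = m then U else .ff γ j (T.substFF β m U)
  | .op i, _, _, _ => .op i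
  | .app T V, β, m, U => .app (T.substFF β m U) (V.substFF β m U)
  | .andI T V, β, m, U => .andI (T.substFF β m U) (V.substFF β m U)
  | .orI b γ T, β, m, U => .orI b γ (T.substFF β m U)
  | .impI γ j T, β, m, U => .impI γ j (T.substFF β m U)
  | .allI y T, β, m, U => .allI y (T.substFF β m U)
  | .exI y t γ T, β, m, U => .exI y t γ (T.substFF β m U)
  | .andE b T, β, m, U => .andE b (T.substFF β m U)
  | .orE γ δ k l T V Z, β, m, U =>
      .orE γ δ k l (T.substFF β m U) (V.substFF β m U) (Z.substFF β m U)
  | .impE T V, β, m, U => .impE (T.substFF β m U) (V.substFF β m U)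
  | .allE t T, β, m, U => .allE t (T.substFF β m U)
  | .exE y γ j T V, β, m, U => .exE y γ j (T.substFF β m U) (V.substFF β m U)
  | .botE γ T, β, m, U => .botE γ (T.substFF β m U)

/-! ### Formulas of the enriched language of grounding -/

/-- Formulas of the enriched language of grounding: `gr T α` is the atomic formula
`Gr(T, α)` (written `T : α`), `equiv T U` is `T ≡ U`, `botG` is ⊥^G, and
`conj, disj, impl, pi, exi` are ×, +, ⊃, Π, 𝔈. -/
inductive GForm : Type
  | gr : GTerm → LFormula → GForm
  | equiv : GTerm → GTerm → GForm
  | botG : GForm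
  | conj : GForm → GForm → GForm
  | disj : GForm → GForm → GForm
  | impl : GForm → GForm → GForm
  | pi : GVar → GForm → GForm
  | exi : GVar → GForm → GForm

/-- Bi-implication `A ⇔ B`, an abbreviation for `(A ⊃ B) × (B ⊃ A)`. -/
def gIff (A B : GForm) : GForm := .conj (.impl A B) (.impl B A)

/-- Negation `¬^G A`, an abbreviation for `A ⊃ ⊥^G`. -/
def gNeg (A : GForm) : GForm := .impl A .botG

/-- Free variables of a formula of the enriched language. -/
def GForm.fvar : GForm → Set GVar
  | .gr T α => T.fvar ∪ (GVar.ind '' α.fv)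
  | .equiv T U => T.fvar ∪ U.fvar
  | .botG => ∅
  | .conj A B => A.fvar ∪ B.fvar
  | .disj A B => A.fvar ∪ B.fvar
  | .impl A B => A.fvar ∪ B.fvar
  | .pi v A => A.fvar \ {v}
  | .exi v A => A.fvar \ {v}

/-- Substitution of `x` by `u` in the type annotations of a variable. -/
def GVar.substInd (x : ℕ) (u : LTerm) : GVar → GVar
  | .ind y => .ind y
  | .xi γ j => .xi (γ.subst x u) j
  | .fh γ y j => .fh (if y = x then γ else γ.subst x u) y j
  | .ff γ j => .ff (γ.subst x u) j

/-- Substitution of the individual variable `x` by `u` in a formula. -/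
def GForm.substInd (x : ℕ) (u : LTerm) : GForm → GForm
  | .gr T α => .gr (T.substInd x u) (α.subst x u)
  | .equiv T U => .equiv (T.substInd x u) (U.substInd x u)
  | .botG => .botG
  | .conj A B => .conj (A.substInd x u) (B.substInd x u)
  | .disj A B => .disj (A.substInd x u) (B.substInd x u)
  | .impl A B => .impl (A.substInd x u) (B.substInd x u)
  | .pi v A => if v = .ind x then .pi v A else .pi (v.substInd x u) (A.substInd x u)
  | .exi v A => if v = .ind x then .exi v A else .exi (v.substInd x u) (A.substInd x u)

/-- Substitution of the typed variable ξ^α_i by the term `W` in a formula. -/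
def GForm.substXi (α : LFormula) (i : ℕ) (W : GTerm) : GForm → GForm
  | .gr T γ => .gr (T.substXi α i W) γ
  | .equiv T U => .equiv (T.substXi α i W) (U.substXi α i W)
  | .botG => .botG
  | .conj A B => .conj (A.substXi α i W) (B.substXi α i W)
  | .disj A B => .disj (A.substXi α i W) (B.substXi α i W)
  | .impl A B => .impl (A.substXi α i W) (B.substXi α i W)
  | .pi v A => if v = .xi α i then .pi v A else .pi v (A.substXi α i W)
  | .exi v A => if v = .xi α i then .exi v A else .exi v (A.substXi α i W)

/-- Substitution of the functional variable h^β_{x,m} by the term `U` in a formula. -/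
def GForm.substFH (β : LFormula) (x m : ℕ) (U : GTerm) : GForm → GForm
  | .gr T γ => .gr (T.substFH β x m U) γ
  | .equiv T V => .equiv (T.substFH β x m U) (V.substFH β x m U)
  | .botG => .botG
  | .conj A B => .conj (A.substFH β x m U) (B.substFH β x m U)
  | .disj A B => .disj (A.substFH β x m U) (B.substFH β x m U)
  | .impl A B => .impl (A.substFH β x m U) (B.substFH β x m U)
  | .pi v A => if v = .fh β x m then .pi v A else .pi v (A.substFH β x m U)
  | .exi v A => if v = .fh β x m then .exi v A else .exi v (A.substFH β x m U)

/-- Substitution of the functional variable f^β_m by the term `U` in a formula. -/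
def GForm.substFF (β : LFormula) (m : ℕ) (U : GTerm) : GForm → GForm
  | .gr T γ => .gr (T.substFF β m U) γ
  | .equiv T V => .equiv (T.substFF β m U) (V.substFF β m U)
  | .botG => .botG
  | .conj A B => .conj (A.substFF β m U) (B.substFF β m U)
  | .disj A B => .disj (A.substFF β m U) (B.substFF β m U)
  | .impl A B => .impl (A.substFF β m U) (B.substFF β m U)
  | .pi v A => if v = .ff β m then .pi v A else .pi v (A.substFF β m U)
  | .exi v A => if v = .ff β m then .exi v A else .exi v (A.substFF β m U)

/-! ### Typing of grounding terms -/

/-- `HasType base T α` : the grounding term `T` is of type `α` (relative to the atomic base,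
represented by the assignment `base` of conclusions to the constants naming closed atomic
derivations). -/
inductive HasType (base : ℕ → LFormula) : GTerm → LFormula → Prop
  | konst (i : ℕ) : HasType base (.konst i) (base i)
  | xi (γ : LFormula) (j : ℕ) : HasType base (.xi γ j) γ
  | fh (γ : LFormula) (y j : ℕ) (t : LTerm) : HasType base (.fh γ y j t) (γ.subst y t)
  | ff {T : GTerm} {δ : LFormula} (γ : LFormula) (j : ℕ) :
      HasType base T δ → HasType base (.ff γ j T) γ
  | andI {T U α β} : HasType base T α → HasType base U β → HasType base (.andI T U) (α.and β)
  | orIL {T α} (β) : HasType base T α → HasType base (.orI true β T) (α.or β)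
  | orIR {T β} (α) : HasType base T β → HasType base (.orI false α T) (α.or β)
  | impI {T β} (α : LFormula) (j : ℕ) : HasType base T β → HasType base (.impI α j T) (α.imp β)
  | allI {T α} (x : ℕ) : HasType base T α →
      (∀ γ j, GVar.xi γ j ∈ T.fvar → x ∉ γ.fv) → HasType base (.allI x T) (.all x α)
  | exI {T} (x : ℕ) (t : LTerm) (α : LFormula) :
      HasType base T (α.subst x t) → t.freeFor x α → HasType base (.exI x t α T) (.ex x α)
  | andEL {T α β} : HasType base T (.and α β) → HasType base (.andE true T) α
  | andER {T α β} : HasType base T (.and α β) → HasType base (.andE false T) β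
  | orE {T U Z α β γ} (i j : ℕ) : HasType base T (.or α β) → HasType base U γ →
      HasType base Z γ → HasType base (.orE α β i j T U Z) γ
  | impE {T U α β} : HasType base T (.imp α β) → HasType base U α → HasType base (.impE T U) β
  | allE {T α} (x : ℕ) (t : LTerm) : HasType base T (.all x α) → t.freeFor x α →
      HasType base (.allE t T) (α.subst x t)
  | exE {T U α β} (x j : ℕ) : HasType base T (.ex x α) → HasType base U β →
      (∀ γ k, GVar.xi γ k ∈ U.fvar → γ ≠ α → x ∉ γ.fv) → HasType base (.exE x α j T U) β
  | botE {T} (α : LFormula) : HasType base T .bot → HasType base (.botE α T) α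

/-! ### Derivations -/

/-- Names of the rules of a system of grounding. -/
inductive RuleTag : Type
  | assum | constAx
  | andIntro | orIntroL | orIntroR | impIntro | allIntro | exIntro
  | dAnd | dOr | dImp | dAll | dEx | botT
  | eqRefl | eqSymm | eqTrans | eqPres
  | congAndI | congAndIInv1 | congAndIInv2 | congAndE
  | congOrI | congOrIInv | congOrE
  | congImpI | congImpIInv | congImpE
  | congAllI | congAllIInv | congAllE
  | congExI | congExIInv | congExE
  | congBotE | congApp
  | rAnd | rOr | rImp | rAll | rEx
  | charR
  | timesI | timesE1 | timesE2 | plusI1 | plusI2 | plusE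
  | supI | supE | piI | piE | frakEI | frakEE | botGE
deriving DecidableEq

/-- Derivation trees: each node carries its conclusion, the rule applied,
and the list of the subderivations of the premises (major premise first). -/
inductive PTree : Type
  | node : GForm → RuleTag → List PTree → PTree

/-- Conclusion of a derivation tree. -/
def PTree.concl : PTree → GForm
  | .node A _ _ => A

/-- The rule applied at the root. -/
def PTree.tag : PTree → RuleTag
  | .node _ r _ => r

/-- `Valid base R Γ t` : the tree `t` is a correct derivation from open assumptions in `Γ`
in the system of grounding over the atomic base represented by `base`, with set `R` of
characteristic rules (premises/conclusion pairs, used for the rewrite equations of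
additional non-primitive operational symbols).  With `R = ∅` this is the system `GG`. -/
inductive Valid (base : ℕ → LFormula) (R : Set (List GForm × GForm)) : Set GForm → PTree → Prop
  -- assumption rule
  | assum {Γ A} : A ∈ Γ → Valid base R Γ (.node A .assum [])
  -- axioms δ : α for the constants naming closed atomic derivations with conclusion α
  | constAx {Γ} (i : ℕ) : Valid base R Γ (.node (.gr (.konst i) (base i)) .constAx [])
  -- type introductions
  | andIntro {Γ t u T U α β} : Valid base R Γ t → Valid base R Γ u →
      t.concl = .gr T α → u.concl = .gr U β →
      Valid base R Γ (.node (.gr (.andI T U) (.and α β)) .andIntro [t, u])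
  | orIntroL {Γ t T α β} : Valid base R Γ t → t.concl = .gr T α →
      Valid base R Γ (.node (.gr (.orI true β T) (.or α β)) .orIntroL [t])
  | orIntroR {Γ t T α β} : Valid base R Γ t → t.concl = .gr T β →
      Valid base R Γ (.node (.gr (.orI false α T) (.or α β)) .orIntroR [t])
  | impIntro {Γ t T α β i} :
      Valid base R (insert (.gr (.xi α i) α) Γ) t → t.concl = .gr T β →
      (∀ B ∈ Γ, GVar.xi α i ∉ B.fvar) →
      Valid base R Γ (.node (.gr (.impI α i T) (.imp α β)) .impIntro [t])
  | allIntro {Γ t T α x} : Valid base R Γ t → t.concl = .gr T α →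
      (∀ B ∈ Γ, GVar.ind x ∉ B.fvar) →
      Valid base R Γ (.node (.gr (.allI x T) (.all x α)) .allIntro [t])
  | exIntro {Γ t T α x u} : Valid base R Γ t → t.concl = .gr T (α.subst x u) →
      u.freeFor x α →
      Valid base R Γ (.node (.gr (.exI x u α T) (.ex x α)) .exIntro [t])
  -- generalized type eliminations
  | dAnd {Γ t s T α β i j A} :
      Valid base R Γ t → t.concl = .gr T (.and α β) →
      Valid base R (insert (.equiv T (.andI (.xi α i) (.xi β j)))
          (insert (.gr (.xi α i) α) (insert (.gr (.xi β j) β) Γ))) s →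
      s.concl = A →
      (∀ B ∈ Γ, GVar.xi α i ∉ B.fvar ∧ GVar.xi β j ∉ B.fvar) →
      GVar.xi α i ∉ A.fvar → GVar.xi β j ∉ A.fvar →
      GVar.xi α i ∉ T.fvar → GVar.xi β j ∉ T.fvar →
      Valid base R Γ (.node A .dAnd [t, s])
  | dOr {Γ t s₁ s₂ T α β i j A} :
      Valid base R Γ t → t.concl = .gr T (.or α β) →
      Valid base R (insert (.equiv T (.orI true β (.xi α i))) (insert (.gr (.xi α i) α) Γ)) s₁ →
      Valid base R (insert (.equiv T (.orI false α (.xi β j))) (insert (.gr (.xi β j) β) Γ)) s₂ →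
      s₁.concl = A → s₂.concl = A →
      (∀ B ∈ Γ, GVar.xi α i ∉ B.fvar ∧ GVar.xi β j ∉ B.fvar) →
      GVar.xi α i ∉ A.fvar → GVar.xi β j ∉ A.fvar →
      GVar.xi α i ∉ T.fvar → GVar.xi β j ∉ T.fvar →
      Valid base R Γ (.node A .dOr [t, s₁, s₂])
  | dImp {Γ t s T α β k m A} :
      Valid base R Γ t → t.concl = .gr T (.imp α β) →
      Valid base R (insert (.equiv T (.impI α k (.ff β m (.xi α k))))
          (insert (.pi (.xi α k) (.impl (.gr (.xi α k) α) (.gr (.ff β m (.xi α k)) β))) Γ)) s →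
      s.concl = A →
      (∀ B ∈ Γ, GVar.ff β m ∉ B.fvar) → GVar.ff β m ∉ A.fvar → GVar.ff β m ∉ T.fvar →
      Valid base R Γ (.node A .dImp [t, s])
  | dAll {Γ t s T α x m A} :
      Valid base R Γ t → t.concl = .gr T (.all x α) →
      Valid base R (insert (.equiv T (.allI x (.fh α x m (.var x))))
          (insert (.pi (.ind x) (.gr (.fh α x m (.var x)) α)) Γ)) s →
      s.concl = A →
      (∀ B ∈ Γ, GVar.fh α x m ∉ B.fvar) → GVar.fh α x m ∉ A.fvar → GVar.fh α x m ∉ T.fvar →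
      Valid base R Γ (.node A .dAll [t, s])
  | dEx {Γ t s T α x j A} :
      Valid base R Γ t → t.concl = .gr T (.ex x α) →
      Valid base R (insert (.equiv T (.exI x (.var x) α (.xi α j)))
          (insert (.gr (.xi α j) α) Γ)) s →
      s.concl = A →
      (∀ B ∈ Γ, GVar.ind x ∉ B.fvar ∧ GVar.xi α j ∉ B.fvar) →
      GVar.ind x ∉ A.fvar → GVar.xi α j ∉ A.fvar → GVar.xi α j ∉ T.fvar →
      Valid base R Γ (.node A .dEx [t, s])
  -- the rule for the type ⊥
  | botT {Γ t T} : Valid base R Γ t → t.concl = .gr T .bot →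
      Valid base R Γ (.node .botG .botT [t])
  -- equivalence rules: reflexivity, symmetry, transitivity, preservation of denotation
  | eqRefl {Γ} (T : GTerm) : Valid base R Γ (.node (.equiv T T) .eqRefl [])
  | eqSymm {Γ t T U} : Valid base R Γ t → t.concl = .equiv T U →
      Valid base R Γ (.node (.equiv U T) .eqSymm [t])
  | eqTrans {Γ t s T U W} : Valid base R Γ t → Valid base R Γ s →
      t.concl = .equiv T U → s.concl = .equiv U W →
      Valid base R Γ (.node (.equiv T W) .eqTrans [t, s])
  | eqPres {Γ t s T U α} : Valid base R Γ t → Valid base R Γ s →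
      t.concl = .equiv T U → s.concl = .gr U α →
      Valid base R Γ (.node (.gr T α) .eqPres [t, s])
  -- congruence: operational symbols applied to equivalent terms yield equivalent terms
  | congAndI {Γ t s T U V W} : Valid base R Γ t → Valid base R Γ s →
      t.concl = .equiv T U → s.concl = .equiv V W →
      Valid base R Γ (.node (.equiv (.andI T V) (.andI U W)) .congAndI [t, s])
  | congAndIInv1 {Γ t T₁ T₂ U₁ U₂} : Valid base R Γ t →
      t.concl = .equiv (.andI T₁ T₂) (.andI U₁ U₂) →
      Valid base R Γ (.node (.equiv T₁ U₁) .congAndIInv1 [t])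
  | congAndIInv2 {Γ t T₁ T₂ U₁ U₂} : Valid base R Γ t →
      t.concl = .equiv (.andI T₁ T₂) (.andI U₁ U₂) →
      Valid base R Γ (.node (.equiv T₂ U₂) .congAndIInv2 [t])
  | congAndE {Γ t T U} (b : Bool) : Valid base R Γ t → t.concl = .equiv T U →
      Valid base R Γ (.node (.equiv (.andE b T) (.andE b U)) .congAndE [t])
  | congOrI {Γ t T U} (b : Bool) (γ : LFormula) : Valid base R Γ t → t.concl = .equiv T U →
      Valid base R Γ (.node (.equiv (.orI b γ T) (.orI b γ U)) .congOrI [t])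
  | congOrIInv {Γ t T U b γ} : Valid base R Γ t →
      t.concl = .equiv (.orI b γ T) (.orI b γ U) →
      Valid base R Γ (.node (.equiv T U) .congOrIInv [t])
  | congOrE {Γ t s₁ s₂ T U V₁ V₂ W₁ W₂} (α β : LFormula) (i j : ℕ) :
      Valid base R Γ t → Valid base R Γ s₁ → Valid base R Γ s₂ →
      t.concl = .equiv T U → s₁.concl = .equiv V₁ V₂ → s₂.concl = .equiv W₁ W₂ →
      Valid base R Γ
        (.node (.equiv (.orE α β i j T V₁ W₁) (.orE α β i j U V₂ W₂)) .congOrE [t, s₁, s₂])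
  | congImpI {Γ t T U} (α : LFormula) (i : ℕ) : Valid base R Γ t → t.concl = .equiv T U →
      Valid base R Γ (.node (.equiv (.impI α i T) (.impI α i U)) .congImpI [t])
  | congImpIInv {Γ t T U α i} : Valid base R Γ t →
      t.concl = .equiv (.impI α i T) (.impI α i U) →
      Valid base R Γ (.node (.equiv T U) .congImpIInv [t])
  | congImpE {Γ t s T₁ T₂ U₁ U₂} : Valid base R Γ t → Valid base R Γ s →
      t.concl = .equiv T₁ T₂ → s.concl = .equiv U₁ U₂ →
      Valid base R Γ (.node (.equiv (.impE T₁ U₁) (.impE T₂ U₂)) .congImpE [t, s])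
  | congAllI {Γ t T U} (x : ℕ) : Valid base R Γ t → t.concl = .equiv T U →
      Valid base R Γ (.node (.equiv (.allI x T) (.allI x U)) .congAllI [t])
  | congAllIInv {Γ t T U x} : Valid base R Γ t →
      t.concl = .equiv (.allI x T) (.allI x U) →
      Valid base R Γ (.node (.equiv T U) .congAllIInv [t])
  | congAllE {Γ t T U} (u : LTerm) : Valid base R Γ t → t.concl = .equiv T U →
      Valid base R Γ (.node (.equiv (.allE u T) (.allE u U)) .congAllE [t])
  | congExI {Γ t T U} (x : ℕ) (u : LTerm) (α : LFormula) :
      Valid base R Γ t → t.concl = .equiv T U →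
      Valid base R Γ (.node (.equiv (.exI x u α T) (.exI x u α U)) .congExI [t])
  | congExIInv {Γ t T U x u α} : Valid base R Γ t →
      t.concl = .equiv (.exI x u α T) (.exI x u α U) →
      Valid base R Γ (.node (.equiv T U) .congExIInv [t])
  | congExE {Γ t s T U V W} (x : ℕ) (α : LFormula) (j : ℕ) :
      Valid base R Γ t → Valid base R Γ s →
      t.concl = .equiv T U → s.concl = .equiv V W →
      Valid base R Γ (.node (.equiv (.exE x α j T V) (.exE x α j U W)) .congExE [t, s])
  | congBotE {Γ t T U} (α : LFormula) : Valid base R Γ t → t.concl = .equiv T U →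
      Valid base R Γ (.node (.equiv (.botE α T) (.botE α U)) .congBotE [t])
  | congApp {Γ t s T U V W} : Valid base R Γ t → Valid base R Γ s →
      t.concl = .equiv T U → s.concl = .equiv V W →
      Valid base R Γ (.node (.equiv (.app T V) (.app U W)) .congApp [t, s])
  -- rewrite equations for computing the non-canonical terms
  | rAnd {Γ} (b : Bool) (T U : GTerm) :
      Valid base R Γ (.node (.equiv (.andE b (.andI T U)) (cond b T U)) .rAnd [])
  | rOrL {Γ} (α β : LFormula) (i j : ℕ) (T U Z : GTerm) :
      Valid base R Γ
        (.node (.equiv (.orE α β i j (.orI true β T) U Z) (U.substXi α i T)) .rOr [])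
  | rOrR {Γ} (α β : LFormula) (i j : ℕ) (T U Z : GTerm) :
      Valid base R Γ
        (.node (.equiv (.orE α β i j (.orI false α T) U Z) (Z.substXi β j T)) .rOr [])
  | rImp {Γ} (α : LFormula) (k : ℕ) (T U : GTerm) :
      Valid base R Γ (.node (.equiv (.impE (.impI α k T) U) (T.substXi α k U)) .rImp [])
  | rAll {Γ} (x : ℕ) (u : LTerm) (T : GTerm) :
      Valid base R Γ (.node (.equiv (.allE u (.allI x T)) (T.substInd x u)) .rAll [])
  | rEx {Γ} (x : ℕ) (u : LTerm) (α : LFormula) (j : ℕ) (T U : GTerm) :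
      Valid base R Γ
        (.node (.equiv (.exE x α j (.exI x u α T) U)
          ((U.substInd x u).substXi (α.subst x u) j T)) .rEx [])
  -- characteristic rules of the system (for expansions of GG)
  | charRule {Γ prems concl} {ts : List PTree} :
      (prems, concl) ∈ R → ts.length = prems.length →
      (∀ (k : ℕ) (t : PTree) (P : GForm), ts[k]? = some t → prems[k]? = some P →
        Valid base R Γ t) →
      (∀ (k : ℕ) (t : PTree) (P : GForm), ts[k]? = some t → prems[k]? = some P →
        t.concl = P) →
      Valid base R Γ (.node concl .charR ts)
  -- intuitionistic logic: ×, +, ⊃, Π, 𝔈, ⊥^G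
  | timesI {Γ t s A B} : Valid base R Γ t → Valid base R Γ s → t.concl = A → s.concl = B →
      Valid base R Γ (.node (.conj A B) .timesI [t, s])
  | timesE1 {Γ t A B} : Valid base R Γ t → t.concl = .conj A B →
      Valid base R Γ (.node A .timesE1 [t])
  | timesE2 {Γ t A B} : Valid base R Γ t → t.concl = .conj A B →
      Valid base R Γ (.node B .timesE2 [t])
  | plusI1 {Γ t A} (B : GForm) : Valid base R Γ t → t.concl = A →
      Valid base R Γ (.node (.disj A B) .plusI1 [t])
  | plusI2 {Γ t B} (A : GForm) : Valid base R Γ t → t.concl = B →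
      Valid base R Γ (.node (.disj A B) .plusI2 [t])
  | plusE {Γ t s₁ s₂ A B C} : Valid base R Γ t → t.concl = .disj A B →
      Valid base R (insert A Γ) s₁ → s₁.concl = C →
      Valid base R (insert B Γ) s₂ → s₂.concl = C →
      Valid base R Γ (.node C .plusE [t, s₁, s₂])
  | supI {Γ t A B} : Valid base R (insert A Γ) t → t.concl = B →
      Valid base R Γ (.node (.impl A B) .supI [t])
  | supE {Γ t s A B} : Valid base R Γ t → Valid base R Γ s →
      t.concl = .impl A B → s.concl = A →
      Valid base R Γ (.node B .supE [t, s])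
  | piI {Γ t A} (v : GVar) : Valid base R Γ t → t.concl = A →
      (∀ C ∈ Γ, v ∉ C.fvar) →
      Valid base R Γ (.node (.pi v A) .piI [t])
  | piEInd {Γ t A x u} : Valid base R Γ t → t.concl = .pi (.ind x) A →
      Valid base R Γ (.node (A.substInd x u) .piE [t])
  | piEXi {Γ t A α i τ} : Valid base R Γ t → t.concl = .pi (.xi α i) A →
      HasType base τ α → τ.noFunVar →
      Valid base R Γ (.node (A.substXi α i τ) .piE [t])
  | piEFh {Γ t A β x m τ} : Valid base R Γ t → t.concl = .pi (.fh β x m) A →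
      HasType base τ β → τ.noFunVar → (∀ γ j, GVar.xi γ j ∈ τ.fvar → x ∉ γ.fv) →
      Valid base R Γ (.node (A.substFH β x m τ) .piE [t])
  | piEFf {Γ t A β m τ} : Valid base R Γ t → t.concl = .pi (.ff β m) A →
      HasType base τ β → τ.noFunVar →
      Valid base R Γ (.node (A.substFF β m τ) .piE [t])
  | frakEIInd {Γ t A x u} : Valid base R Γ t → t.concl = A.substInd x u →
      Valid base R Γ (.node (.exi (.ind x) A) .frakEI [t])
  | frakEIXi {Γ t A α i τ} : Valid base R Γ t → t.concl = A.substXi α i τ →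
      HasType base τ α → τ.noFunVar →
      Valid base R Γ (.node (.exi (.xi α i) A) .frakEI [t])
  | frakEIFh {Γ t A β x m τ} : Valid base R Γ t → t.concl = A.substFH β x m τ →
      HasType base τ β → τ.noFunVar → (∀ γ j, GVar.xi γ j ∈ τ.fvar → x ∉ γ.fv) →
      Valid base R Γ (.node (.exi (.fh β x m) A) .frakEI [t])
  | frakEIFf {Γ t A β m τ} : Valid base R Γ t → t.concl = A.substFF β m τ →
      HasType base τ β → τ.noFunVar →
      Valid base R Γ (.node (.exi (.ff β m) A) .frakEI [t])
  | frakEE {Γ t s A B} (v : GVar) : Valid base R Γ t → t.concl = .exi v A →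
      Valid base R (insert A Γ) s → s.concl = B →
      (∀ C ∈ Γ, v ∉ C.fvar) → v ∉ B.fvar →
      Valid base R Γ (.node B .frakEE [t, s])
  | botGE {Γ t} (A : GForm) : Valid base R Γ t → t.concl = .botG →
      Valid base R Γ (.node A .botGE [t])

/-- `Deriv base R Γ A` : the formula `A` is derivable from assumptions `Γ` in the system
of grounding determined by `base` and `R`.  `Deriv base ∅ Γ A` is derivability in `GG`,
i.e. `Γ ⊢_GG A`. -/
def Deriv (base : ℕ → LFormula) (R : Set (List GForm × GForm)) (Γ : Set GForm)
    (A : GForm) : Prop :=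
  ∃ t : PTree, Valid base R Γ t ∧ t.concl = A

/-! ### Part B: occurrences, cut-segments, measures, reductions and normal form -/

/-- Positions (occurrences) in a derivation tree: a path from the root (the conclusion,
standing lowest) to a node; longer positions stand higher in the derivation. -/
abbrev Pos := List ℕ

/-- The subtree of `t` at position `p` (if any). -/
def PTree.sub : PTree → Pos → Option PTree
  | t, [] => some t
  | .node _ _ l, k :: p => (l[k]?).bind fun c => PTree.sub c p
termination_by t p => p.length

/-- The formula occurring at position `p`. -/
def formulaAt (Δ : PTree) (p : Pos) : Option GForm := (Δ.sub p).map PTree.concl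

/-- The rule applied at position `p`. -/
def tagAt (Δ : PTree) (p : Pos) : Option RuleTag := (Δ.sub p).map PTree.tag

/-- The occurrence `p` stands above the occurrence `q` (`q` is a proper prefix of `p`;
conclusions stand at the bottom). -/
def StandsAbove (p q : Pos) : Prop := q ≠ p ∧ q <+: p

/-- Two occurrences are side-connected iff they are premises of one and the same
inference. -/
def SideConnected (Δ : PTree) (p q : Pos) : Prop :=
  (formulaAt Δ p).isSome ∧ (formulaAt Δ q).isSome ∧
  ∃ r k m, k ≠ m ∧ p = r ++ [k] ∧ q = r ++ [m]

/-- `r` is a type introduction rule. -/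
def RuleTag.isTypeIntro (r : RuleTag) : Prop :=
  r = .andIntro ∨ r = .orIntroL ∨ r = .orIntroR ∨ r = .impIntro ∨ r = .allIntro ∨ r = .exIntro

/-- `r` is an introduction rule for a logical constant of the enriched language. -/
def RuleTag.isLogicIntro (r : RuleTag) : Prop :=
  r = .timesI ∨ r = .plusI1 ∨ r = .plusI2 ∨ r = .supI ∨ r = .piI ∨ r = .frakEI

/-- `r` is a generalized type elimination rule. -/
def RuleTag.isTypeElim (r : RuleTag) : Prop :=
  r = .dAnd ∨ r = .dOr ∨ r = .dImp ∨ r = .dAll ∨ r = .dEx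

/-- `r` is one of (+_E), (𝔈_E) or a type elimination (the rules through which segments
may pass). -/
def RuleTag.isPermElim (r : RuleTag) : Prop :=
  r = .plusE ∨ r = .frakEE ∨ r.isTypeElim

/-- `r` is an elimination rule (with its major premise as first premise). -/
def RuleTag.isMajorElim (r : RuleTag) : Prop :=
  r = .timesE1 ∨ r = .timesE2 ∨ r = .plusE ∨ r = .supE ∨ r = .piE ∨ r = .frakEE ∨
    r.isTypeElim

/-- The elimination rule `re` corresponds to the introduction rule `ri`
(D_s for sI, (κ_E) for (κ_I)). -/
def RuleTag.matchIE : RuleTag → RuleTag → Prop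
  | .andIntro, .dAnd => True
  | .orIntroL, .dOr => True
  | .orIntroR, .dOr => True
  | .impIntro, .dImp => True
  | .allIntro, .dAll => True
  | .exIntro, .dEx => True
  | .timesI, .timesE1 => True
  | .timesI, .timesE2 => True
  | .plusI1, .plusE => True
  | .plusI2, .plusE => True
  | .supI, .supE => True
  | .piI, .piE => True
  | .frakEI, .frakEE => True
  | _, _ => False

/-- `IsCutSeg Δ σ A` : `σ` (listed from the upper edge down to the lower edge) is a
cut-segment of `Δ` with formula `A`: a sequence of occurrences of `A` whose first member is
the conclusion of a type introduction or of a logical introduction, each following member is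
the conclusion of (+_E), (𝔈_E) or a type elimination of which the preceding member is a
minor premise, and whose last member is the major premise of the elimination corresponding
to the initial introduction. -/
def IsCutSeg (Δ : PTree) (σ : List Pos) (A : GForm) : Prop :=
  σ ≠ [] ∧
  (∀ p ∈ σ, formulaAt Δ p = some A) ∧
  (∃ p ri, σ.head? = some p ∧ tagAt Δ p = some ri ∧ (ri.isTypeIntro ∨ ri.isLogicIntro) ∧
    ∃ q pr re, σ.getLast? = some q ∧ q = pr ++ [0] ∧ tagAt Δ pr = some re ∧
      ri.matchIE re) ∧
  List.Chain' (fun p q => (∃ k, k ≠ 0 ∧ q ++ [k] = p) ∧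
    ∃ r', tagAt Δ q = some r' ∧ r'.isPermElim) σ

/-- Lexicographic ("alphabetic") strict order on measures. -/
def mlt (a b : ℕ × ℕ) : Prop := a.1 < b.1 ∨ (a.1 = b.1 ∧ a.2 < b.2)

/-- Lexicographic order on measures (reflexive). -/
def mle (a b : ℕ × ℕ) : Prop := a = b ∨ mlt a b

/-- The type-measure τ(A): the maximum of k¹(α) over the subformulas `U : α` of `A`
(0 if there are none). -/
def GForm.tmeas : GForm → ℕ
  | .gr _ α => α.compl
  | .equiv _ _ => 0
  | .botG => 0
  | .conj A B => max A.tmeas B.tmeas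
  | .disj A B => max A.tmeas B.tmeas
  | .impl A B => max A.tmeas B.tmeas
  | .pi _ A => A.tmeas
  | .exi _ A => A.tmeas

/-- The logical measure k²(A) of a formula of the enriched language. -/
def GForm.lmeas : GForm → ℕ
  | .gr _ _ => 0
  | .equiv _ _ => 0
  | .botG => 0
  | .conj A B => max A.lmeas B.lmeas + 1
  | .disj A B => max A.lmeas B.lmeas + 1
  | .impl A B => max A.lmeas B.lmeas + 1
  | .pi _ A => A.lmeas + 1
  | .exi _ A => A.lmeas + 1

/-- The measure μ(A) = (τ(A), k²(A)). -/
def GForm.meas (A : GForm) : ℕ × ℕ := (A.tmeas, A.lmeas)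

/-- M_Δ : the set of the measures of the cut-segments of Δ. -/
def measSet (Δ : PTree) : Set (ℕ × ℕ) := {m | ∃ σ A, IsCutSeg Δ σ A ∧ GForm.meas A = m}

/-- `m` is MAX(M_Δ) (with MAX(∅) = (0,0)). -/
def IsMaxMeas (Δ : PTree) (m : ℕ × ℕ) : Prop :=
  (m ∈ measSet Δ ∨ (measSet Δ = ∅ ∧ m = (0, 0))) ∧ ∀ m' ∈ measSet Δ, mle m' m

/-- `DegreeIs Δ d` : the degree of Δ is `d = (MAX(M_Δ), n)`, where `n` is the sum of the
lengths of the cut-segments of Δ of measure MAX(M_Δ). -/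
def DegreeIs (Δ : PTree) (d : (ℕ × ℕ) × ℕ) : Prop :=
  IsMaxMeas Δ d.1 ∧
  ∃ s : Finset (List Pos),
    (∀ σ, σ ∈ s ↔ ∃ A, IsCutSeg Δ σ A ∧ GForm.meas A = d.1) ∧
    d.2 = s.sum List.length

/-- Lexicographic strict order on degrees. -/
def dlt (d e : (ℕ × ℕ) × ℕ) : Prop := mlt d.1 e.1 ∨ (d.1 = e.1 ∧ d.2 < e.2)

/-- Δ is non-normal iff it contains a cut-segment (equivalently, iff its degree is not
((0,0),0)). -/
def NonNormal (Δ : PTree) : Prop := ∃ σ A, IsCutSeg Δ σ A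

/-- A topmost maximal cut-segment (tmcs): a cut-segment of maximal measure such that no
cut-segment of equal measure has its lower edge above its upper edge. -/
def IsTmcs (Δ : PTree) (σ : List Pos) (A : GForm) : Prop :=
  IsCutSeg Δ σ A ∧ IsMaxMeas Δ (GForm.meas A) ∧
  ∀ σ' A', IsCutSeg Δ σ' A' → GForm.meas A' = GForm.meas A →
    ∀ p q, σ'.getLast? = some p → σ.head? = some q → ¬ StandsAbove p q

/-- Two cut-segments are disjoint iff they share no occurrence. -/
def SegDisjoint (σ₁ σ₂ : List Pos) : Prop := ∀ p ∈ σ₁, p ∉ σ₂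

/-- `σ₂` stands to the right of `σ₁`: the lower edge of `σ₁` is side-connected either with
an occurrence in `σ₂` or with a formula occurrence of Δ standing below the lower edge
of `σ₂`. -/
def RightRel (Δ : PTree) (σ₁ σ₂ : List Pos) : Prop :=
  ∃ p, σ₁.getLast? = some p ∧
    ((∃ q ∈ σ₂, SideConnected Δ p q) ∨
     (∃ q r, σ₂.getLast? = some r ∧ StandsAbove r q ∧ SideConnected Δ p q))

/-- Map a function over all the formulas occurring in a derivation tree
(used for substitution throughout a derivation). -/
def PTree.mapF (f : GForm → GForm) : PTree → PTree
  | .node A r l => .node (f A) r (l.attach.map fun c => c.1.mapF f)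
termination_by t => sizeOf t
decreasing_by
  have := List.sizeOf_lt_of_mem c.2
  simp only [PTree.node.sizeOf_spec]
  omega

/-- Replace the assumption leaves with formula `A` by the derivation `d`. -/
def PTree.replaceAssm : PTree → GForm → PTree → PTree
  | .node B r l, A, d =>
      if r = RuleTag.assum ∧ l = [] ∧ B = A then d
      else .node B r (l.attach.map fun c => c.1.replaceAssm A d)
termination_by t _ _ => sizeOf t
decreasing_by
  have := List.sizeOf_lt_of_mem c.2
  simp only [PTree.node.sizeOf_spec]
  omega

/-- The one-node derivation consisting of an application of the reflexivity axiom to T. -/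
def reflLeaf (T : GTerm) : PTree := .node (.equiv T T) .eqRefl []

/-- `Red1 Δ Δ'` : `Δ'` is obtained from `Δ` by one application of a reduction function for
typing maximal formulas (TMF) or for logically maximal formulas (LMF), or of a permutation
function, possibly inside a subderivation. -/
inductive Red1 : PTree → PTree → Prop
  -- reduction inside a subderivation
  | congr {A r l₁ l₂ t t'} : Red1 t t' →
      Red1 (.node A r (l₁ ++ t :: l₂)) (.node A r (l₁ ++ t' :: l₂))
  -- TMF reductions
  | tmfAnd {A : GForm} {α β : LFormula} {T U : GTerm} {i j : ℕ} {d₁ d₂ minor : PTree} :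
      Red1 (.node A .dAnd [.node (.gr (.andI T U) (.and α β)) .andIntro [d₁, d₂], minor])
        ((((minor.mapF fun B => (B.substXi α i T).substXi β j U).replaceAssm
            (.equiv (.andI T U) (.andI T U)) (reflLeaf (.andI T U))).replaceAssm
            (.gr T α) d₁).replaceAssm (.gr U β) d₂)
  | tmfOrL {A : GForm} {α β : LFormula} {T : GTerm} {i : ℕ} {d₁ m₁ m₂ : PTree} :
      Red1 (.node A .dOr [.node (.gr (.orI true β T) (.or α β)) .orIntroL [d₁], m₁, m₂])
        (((m₁.mapF fun B => B.substXi α i T).replaceAssm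
            (.equiv (.orI true β T) (.orI true β T)) (reflLeaf (.orI true β T))).replaceAssm
            (.gr T α) d₁)
  | tmfOrR {A : GForm} {α β : LFormula} {T : GTerm} {j : ℕ} {d₁ m₁ m₂ : PTree} :
      Red1 (.node A .dOr [.node (.gr (.orI false α T) (.or α β)) .orIntroR [d₁], m₁, m₂])
        (((m₂.mapF fun B => B.substXi β j T).replaceAssm
            (.equiv (.orI false α T) (.orI false α T)) (reflLeaf (.orI false α T))).replaceAssm
            (.gr T β) d₁)
  | tmfImp {A : GForm} {α β : LFormula} {T : GTerm} {k m : ℕ} {d₁ minor : PTree} :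
      Red1 (.node A .dImp [.node (.gr (.impI α k T) (.imp α β)) .impIntro [d₁], minor])
        (((minor.mapF fun B => B.substFF β m T).replaceAssm
            (.equiv (.impI α k T) (.impI α k T)) (reflLeaf (.impI α k T))).replaceAssm
            (.pi (.xi α k) (.impl (.gr (.xi α k) α) (.gr T β)))
            (.node (.pi (.xi α k) (.impl (.gr (.xi α k) α) (.gr T β))) .piI
              [.node (.impl (.gr (.xi α k) α) (.gr T β)) .supI [d₁]]))
  | tmfAll {A : GForm} {α : LFormula} {x m : ℕ} {T : GTerm} {d₁ minor : PTree} :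
      Red1 (.node A .dAll [.node (.gr (.allI x T) (.all x α)) .allIntro [d₁], minor])
        (((minor.mapF fun B => B.substFH α x m T).replaceAssm
            (.equiv (.allI x T) (.allI x T)) (reflLeaf (.allI x T))).replaceAssm
            (.pi (.ind x) (.gr T α)) (.node (.pi (.ind x) (.gr T α)) .piI [d₁]))
  | tmfEx {A : GForm} {α : LFormula} {x j : ℕ} {u : LTerm} {T : GTerm} {d₁ minor : PTree} :
      Red1 (.node A .dEx [.node (.gr (.exI x u α T) (.ex x α)) .exIntro [d₁], minor])
        (((minor.mapF fun B => (B.substInd x u).substXi (α.subst x u) j T).replaceAssm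
            (.equiv (.exI x u α T) (.exI x u α T)) (reflLeaf (.exI x u α T))).replaceAssm
            (.gr T (α.subst x u)) d₁)
  -- LMF reductions
  | lmfTimes1 {A B : GForm} {d₁ d₂ : PTree} :
      Red1 (.node A .timesE1 [.node (.conj A B) .timesI [d₁, d₂]]) d₁
  | lmfTimes2 {A B : GForm} {d₁ d₂ : PTree} :
      Red1 (.node B .timesE2 [.node (.conj A B) .timesI [d₁, d₂]]) d₂
  | lmfPlus1 {A B C : GForm} {d s₁ s₂ : PTree} :
      Red1 (.node C .plusE [.node (.disj A B) .plusI1 [d], s₁, s₂]) (s₁.replaceAssm A d)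
  | lmfPlus2 {A B C : GForm} {d s₁ s₂ : PTree} :
      Red1 (.node C .plusE [.node (.disj A B) .plusI2 [d], s₁, s₂]) (s₂.replaceAssm B d)
  | lmfSup {A B : GForm} {d₁ d₂ : PTree} :
      Red1 (.node B .supE [.node (.impl A B) .supI [d₁], d₂]) (d₁.replaceAssm A d₂)
  | lmfPiInd {A : GForm} {x : ℕ} {u : LTerm} {d : PTree} :
      Red1 (.node (A.substInd x u) .piE [.node (.pi (.ind x) A) .piI [d]])
        (d.mapF (GForm.substInd x u))
  | lmfPiXi {A : GForm} {α : LFormula} {i : ℕ} {τ : GTerm} {d : PTree} :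
      Red1 (.node (A.substXi α i τ) .piE [.node (.pi (.xi α i) A) .piI [d]])
        (d.mapF (GForm.substXi α i τ))
  | lmfPiFh {A : GForm} {β : LFormula} {x m : ℕ} {τ : GTerm} {d : PTree} :
      Red1 (.node (A.substFH β x m τ) .piE [.node (.pi (.fh β x m) A) .piI [d]])
        (d.mapF (GForm.substFH β x m τ))
  | lmfPiFf {A : GForm} {β : LFormula} {m : ℕ} {τ : GTerm} {d : PTree} :
      Red1 (.node (A.substFF β m τ) .piE [.node (.pi (.ff β m) A) .piI [d]])
        (d.mapF (GForm.substFF β m τ))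
  | lmfFrakEInd {A B : GForm} {x : ℕ} {u : LTerm} {d s : PTree} :
      d.concl = A.substInd x u →
      Red1 (.node B .frakEE [.node (.exi (.ind x) A) .frakEI [d], s])
        ((s.mapF (GForm.substInd x u)).replaceAssm (A.substInd x u) d)
  | lmfFrakEXi {A B : GForm} {α : LFormula} {i : ℕ} {τ : GTerm} {d s : PTree} :
      d.concl = A.substXi α i τ →
      Red1 (.node B .frakEE [.node (.exi (.xi α i) A) .frakEI [d], s])
        ((s.mapF (GForm.substXi α i τ)).replaceAssm (A.substXi α i τ) d)
  | lmfFrakEFh {A B : GForm} {β : LFormula} {x m : ℕ} {τ : GTerm} {d s : PTree} :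
      d.concl = A.substFH β x m τ →
      Red1 (.node B .frakEE [.node (.exi (.fh β x m) A) .frakEI [d], s])
        ((s.mapF (GForm.substFH β x m τ)).replaceAssm (A.substFH β x m τ) d)
  | lmfFrakEFf {A B : GForm} {β : LFormula} {m : ℕ} {τ : GTerm} {d s : PTree} :
      d.concl = A.substFF β m τ →
      Red1 (.node B .frakEE [.node (.exi (.ff β m) A) .frakEI [d], s])
        ((s.mapF (GForm.substFF β m τ)).replaceAssm (A.substFF β m τ) d)
  -- permutation functions
  | perm {B S : GForm} {er pr : RuleTag} {maj : PTree} {ms rest : List PTree} :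
      er.isMajorElim → pr.isPermElim →
      Red1 (.node B er (.node S pr (maj :: ms) :: rest))
        (.node B pr (maj :: ms.map fun mnr => .node B er (mnr :: rest)))

/-- Δ immediately reduces to Δ' (Δ ⪰ Δ'). -/
def RedEq (Δ Δ' : PTree) : Prop := Δ = Δ' ∨ Red1 Δ Δ'

/-- Δ reduces to Δ' (Δ ≻ Δ'): there is a finite chain Δ = Δ₁ ⪰ Δ₂ ⪰ ... ⪰ Δₙ = Δ'. -/
def Reduces (Δ Δ' : PTree) : Prop := Relation.ReflTransGen RedEq Δ Δ'

/-- The individual variables occurring unbound in (a formula occurrence of) a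
derivation. -/
def treeIndVars (Δ : PTree) : Set ℕ :=
  {x | ∃ p A, formulaAt Δ p = some A ∧ GVar.ind x ∈ A.fvar}

/-- `R` is a correct set of characteristic rules of a system of grounding: the premises and
conclusions of its rules are equivalences, and the rewrite equations are closed under
substitution of (all kinds of) variables by terms. -/
def CharRuleSet (R : Set (List GForm × GForm)) : Prop :=
  (∀ p c, (p, c) ∈ R →
    ((∀ P ∈ p, ∃ T U : GTerm, P = GForm.equiv T U) ∧ ∃ T U : GTerm, c = GForm.equiv T U)) ∧
  (∀ p c, (p, c) ∈ R →
    (∀ x u, (p.map (GForm.substInd x u), c.substInd x u) ∈ R) ∧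
    (∀ α i W, (p.map (GForm.substXi α i W), c.substXi α i W) ∈ R) ∧
    (∀ β x m U, (p.map (GForm.substFH β x m U), c.substFH β x m U) ∈ R) ∧
    (∀ β m U, (p.map (GForm.substFF β m U), c.substFF β m U) ∈ R))


/-! ### Auxiliary machinery for the proof of STATEMENT 16 -/

/-- One step of a cut-segment, read downwards: the lower occurrence `q` extended by a
nonzero premise index gives the upper occurrence `p`. -/
private def SegStep (p q : List ℕ) : Prop := ∃ k, k ≠ 0 ∧ q ++ [k] = p

/-- `u` branches off strictly to the right of `v`: at some index `d` (within both) they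
agree below `d`, `v` continues with `0` and `u` with a nonzero index. -/
private def RightOf (u v : List ℕ) : Prop :=
  ∃ d, d < u.length ∧ d < v.length ∧ (∀ e, e < d → u.getD e 0 = v.getD e 0) ∧
    v.getD d 0 = 0 ∧ u.getD d 0 ≠ 0

private lemma getD_of_prefix {u w : List ℕ} (h : u <+: w) {e : ℕ} (he : e < u.length) :
    w.getD e 0 = u.getD e 0 := by
  obtain ⟨s, rfl⟩ := h
  exact List.getD_append _ _ _ _ he

private lemma getD_concat (l : List ℕ) (a : ℕ) : (l ++ [a]).getD l.length 0 = a := by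
  rw [List.getD_append_right _ _ _ _ le_rfl]
  simp

private lemma prefix_of_prefix_concat {c l : List ℕ} {a : ℕ} (h : c <+: l ++ [a])
    (hne : c ≠ l ++ [a]) : c <+: l := by
  have hlen : c.length < (l ++ [a]).length := by
    rcases lt_or_eq_of_le h.length_le with h' | h'
    · exact h'
    · exact absurd (h.eq_of_length h') hne
  simp only [List.length_append, List.length_singleton] at hlen
  exact List.prefix_of_prefix_length_le h (l.prefix_append [a]) (by omega)

private lemma prefix_head (σ : List (List ℕ)) (hc : List.Chain' SegStep σ) :
    ∀ h, σ.head? = some h → ∀ x ∈ σ, x <+: h := by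
  induction σ with
  | nil => intro h hh; simp at hh
  | cons a t ih =>
    intro h hh x hx
    obtain rfl : a = h := by simpa using hh
    rcases List.mem_cons.mp hx with rfl | hx
    · exact List.prefix_refl _
    · cases t with
      | nil => simp at hx
      | cons b t' =>
        have hstep : SegStep a b := (List.isChain_cons_cons.mp hc).1
        have hbt : x <+: b := ih hc.tail b rfl x hx
        obtain ⟨k, _, hk⟩ := hstep
        exact hbt.trans ⟨[k], hk⟩

private lemma getLast_prefix (σ : List (List ℕ)) (hc : List.Chain' SegStep σ) :
    ∀ g, σ.getLast? = some g → ∀ x ∈ σ, g <+: x := by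
  induction σ with
  | nil => intro g hg; simp at hg
  | cons a t ih =>
    intro g hg x hx
    cases t with
    | nil =>
      obtain rfl : a = g := by simpa using hg
      rcases List.mem_cons.mp hx with rfl | hx
      · exact List.prefix_refl _
      · simp at hx
    | cons b t' =>
      have hg' : (b :: t').getLast? = some g := by
        rwa [List.getLast?_cons_cons] at hg
      rcases List.mem_cons.mp hx with rfl | hx
      · have hb := ih hc.tail g hg' b (List.mem_cons_self)
        obtain ⟨k, hk0, hk⟩ := (List.isChain_cons_cons.mp hc).1
        exact hb.trans ⟨[k], hk⟩
      · exact ih hc.tail g hg' x hx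

/-- The key step of the invariant: if `c` stands to the right of `v` and `c` is either an
occurrence of a cut-segment `σ'` or stands (weakly) below its lower edge `b' ++ [0]`, then
every sibling branch point `b' ++ [m']` (`m' ≠ 0`) of the lower edge of `σ'` also stands
to the right of `v`. -/
private lemma step_lemma {σ' : List (List ℕ)} (hc : List.Chain' SegStep σ') {b' : List ℕ}
    (hL : σ'.getLast? = some (b' ++ [0])) {c v : List ℕ}
    (hrel : c ∈ σ' ∨ (c ≠ b' ++ [0] ∧ c <+: b' ++ [0]))
    (hro : RightOf c v) :
    ∀ m', m' ≠ 0 → RightOf (b' ++ [m']) v := by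
  obtain ⟨d, hdu, hdv, hag, hv0, hu0⟩ := hro
  intro m' hm'
  have hblen : b'.length < (b' ++ [m']).length := by
    simp [List.length_append]
  rcases hrel with hmem | ⟨hne, hpre⟩
  · -- `c` is an occurrence of `σ'`, so the lower edge `b' ++ [0]` is a prefix of `c`
    have hpref : (b' ++ [0]) <+: c := getLast_prefix σ' hc _ hL c hmem
    have hlen : b'.length + 1 ≤ c.length := by
      have := hpref.length_le
      simpa using this
    have hd_ne : d ≠ b'.length := by
      intro h
      subst h
      have h0 : c.getD b'.length 0 = 0 := by
        rw [getD_of_prefix hpref (by simp), getD_concat]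
      exact hu0 h0
    rcases lt_or_gt_of_ne hd_ne with hlt | hgt
    · -- divergence index below `b'.length`: keep the same witness
      refine ⟨d, by omega, hdv, ?_, hv0, ?_⟩
      · intro e he
        have he' : e < b'.length := lt_trans he hlt
        have h1 : (b' ++ [m']).getD e 0 = b'.getD e 0 := List.getD_append _ _ _ _ he'
        have h2 : c.getD e 0 = b'.getD e 0 := by
          rw [getD_of_prefix hpref (by simp; omega), List.getD_append _ _ _ _ he']
        rw [h1, ← h2]
        exact hag e he
      · have h1 : (b' ++ [m']).getD d 0 = b'.getD d 0 := List.getD_append _ _ _ _ hlt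
        have h2 : c.getD d 0 = b'.getD d 0 := by
          rw [getD_of_prefix hpref (by simp; omega), List.getD_append _ _ _ _ hlt]
        rw [h1, ← h2]
        exact hu0
    · -- divergence index above `b'.length`: new divergence at `b'.length`
      refine ⟨b'.length, hblen, by omega, ?_, ?_, ?_⟩
      · intro e he
        have h1 : (b' ++ [m']).getD e 0 = b'.getD e 0 := List.getD_append _ _ _ _ he
        have h2 : c.getD e 0 = b'.getD e 0 := by
          rw [getD_of_prefix hpref (by simp; omega), List.getD_append _ _ _ _ he]
        rw [h1, ← h2]
        exact hag e (by omega)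
      · have h2 : c.getD b'.length 0 = 0 := by
          rw [getD_of_prefix hpref (by simp), getD_concat]
        rw [← hag b'.length hgt]
        exact h2
      · rw [getD_concat]
        exact hm'
  · -- `c` stands (strictly) below the lower edge, so `c <+: b'`
    have hcb : c <+: b' := prefix_of_prefix_concat hpre hne
    have hclen : c.length ≤ b'.length := hcb.length_le
    refine ⟨d, by omega, hdv, ?_, hv0, ?_⟩
    · intro e he
      have h1 : (b' ++ [m']).getD e 0 = c.getD e 0 :=
        getD_of_prefix (hcb.trans (b'.prefix_append [m'])) (by omega)
      rw [h1]
      exact hag e he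
    · have h1 : (b' ++ [m']).getD d 0 = c.getD d 0 :=
        getD_of_prefix (hcb.trans (b'.prefix_append [m'])) hdu
      rw [h1]
      exact hu0

private lemma rightOf_base (b : List ℕ) (m : ℕ) (hm : m ≠ 0) : RightOf (b ++ [m]) (b ++ [0]) :=
  ⟨b.length, by simp only [List.length_append, List.length_singleton]; omega,
    by simp only [List.length_append, List.length_singleton]; omega,
    fun e he => by rw [List.getD_append _ _ _ _ he, List.getD_append _ _ _ _ he],
    getD_concat _ _, by rw [getD_concat]; exact hm⟩

private lemma sub_length_lt {p : Pos} : ∀ {t t' : PTree}, t.sub p = some t' →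
    p.length < sizeOf t := by
  induction p with
  | nil =>
    intro t t' h
    cases t with
    | node A r l => simp only [List.length_nil, PTree.node.sizeOf_spec]; omega
  | cons k p ih =>
    intro t t' h
    cases t with
    | node A r l =>
      simp only [PTree.sub] at h
      obtain ⟨c, hc, hsub⟩ := Option.bind_eq_some_iff.mp h
      have h1 := ih hsub
      have h2 : sizeOf c < sizeOf l := List.sizeOf_lt_of_mem (List.mem_of_getElem? hc)
      simp only [PTree.node.sizeOf_spec, List.length_cons]
      omega

private lemma cutseg_facts {Δ : PTree} {σ : List Pos} {A : GForm} (h : IsCutSeg Δ σ A) :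
    ∃ hd pr, σ.head? = some hd ∧ σ.getLast? = some (pr ++ [0]) ∧
      List.Chain' SegStep σ ∧ ∀ x ∈ σ, formulaAt Δ x = some A := by
  obtain ⟨hne, hform, ⟨p, ri, hh, -, -, q, pr, re, hl, hq, -, -⟩, hch⟩ := h
  subst hq
  exact ⟨p, pr, hh, hl, hch.imp fun a b hab => hab.1, hform⟩

private lemma sideconn_sibling {Δ : PTree} {pr q : List ℕ}
    (h : SideConnected Δ (pr ++ [(0 : ℕ)]) q) : ∃ m, m ≠ 0 ∧ q = pr ++ [m] := by
  obtain ⟨-, -, r, k, m, hkm, hp, hq⟩ := h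
  obtain ⟨rfl, hk⟩ := List.append_inj' hp rfl
  have hk0 : k = 0 := by simpa using hk.symm
  subst hk0
  exact ⟨m, fun h0 => hkm h0.symm, hq⟩

/-- The engine of STATEMENT 16. -/
private lemma key (Δ : PTree) (n : ℕ) (σs : ℕ → List Pos) (As : ℕ → GForm)
    (hn : 1 ≤ n)
    (htm : ∀ i, 1 ≤ i → i ≤ n → IsTmcs Δ (σs i) (As i))
    (hch : ∀ i, 1 ≤ i → i < n → RightRel Δ (σs i) (σs (i + 1)))
    (σx : List Pos) (Ax : GForm) (hxseg : IsCutSeg Δ σx Ax)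
    (hmx : GForm.meas Ax = GForm.meas (As n)) (hrx : RightRel Δ (σs n) σx) :
    ∃ σ2 A2, IsTmcs Δ σ2 A2 ∧ ∀ i, 1 ≤ i → i ≤ n → SegDisjoint (σs i) σ2 := by
  classical
  obtain ⟨hdn, prn, hheadn, hlastn, hchainn, -⟩ := cutseg_facts (htm n hn le_rfl).1
  obtain ⟨hdx, prx, hheadx, hlastx, hchainx, -⟩ := cutseg_facts hxseg
  -- extract the sibling branch point `c = prn ++ [mN]` from the final RightRel
  obtain ⟨p, hp, hcases⟩ := hrx
  have hpp : p = prn ++ [0] := by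
    rw [hlastn] at hp; exact (Option.some.inj hp).symm
  subst hpp
  have hc : ∃ m, m ≠ 0 ∧ (prn ++ [m]) <+: hdx := by
    rcases hcases with ⟨q, hqmem, hsc⟩ | ⟨q, r, hr, ⟨hqner, hqpre⟩, hsc⟩
    · obtain ⟨m, hm, rfl⟩ := sideconn_sibling hsc
      exact ⟨m, hm, prefix_head σx hchainx hdx hheadx _ hqmem⟩
    · obtain ⟨m, hm, rfl⟩ := sideconn_sibling hsc
      have hrmem : r ∈ σx := List.mem_of_getLast? hr
      exact ⟨m, hm, hqpre.trans (prefix_head σx hchainx hdx hheadx r hrmem)⟩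
  obtain ⟨mN, hmN, hcpre⟩ := hc
  -- the set of head lengths of maximal-measure cut-segments above the branch point
  set SS : Set ℕ := {l | ∃ σ A h, IsCutSeg Δ σ A ∧ GForm.meas A = GForm.meas (As n) ∧
    σ.head? = some h ∧ (prn ++ [mN]) <+: h ∧ h.length = l} with hSS
  have hSne : SS.Nonempty := ⟨hdx.length, σx, Ax, hdx, hxseg, hmx, hheadx, hcpre, rfl⟩
  have hSbdd : BddAbove SS := by
    refine ⟨sizeOf Δ, fun l hl => ?_⟩
    obtain ⟨σ, A, h, hseg, -, hh, -, rfl⟩ := hl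
    obtain ⟨-, -, -, -, -, hform⟩ := cutseg_facts hseg
    obtain ⟨ys, rfl⟩ := List.head?_eq_some_iff.mp hh
    have hfa := hform h (List.mem_cons_self)
    simp only [formulaAt] at hfa
    obtain ⟨t', hsub, -⟩ := Option.map_eq_some_iff.mp hfa
    exact le_of_lt (sub_length_lt hsub)
  have hmaxmem := Nat.sSup_mem hSne hSbdd
  obtain ⟨σ2, A2, h2, h2seg, h2meas, h2head, h2cpre, h2len⟩ := hmaxmem
  obtain ⟨hd2, pr2, hhead2, hlast2, hchain2, -⟩ := cutseg_facts h2seg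
  refine ⟨σ2, A2, ⟨h2seg, ?_, ?_⟩, ?_⟩
  · rw [h2meas]
    exact (htm n hn le_rfl).2.1
  · -- topmost: no equal-measure segment has its lower edge above the head of σ2
    intro σ' A' hseg' hmeas' p' q2 hlast' hhead' hsa
    have hq2 : q2 = h2 := Option.some.inj (hhead' ▸ h2head)
    obtain ⟨hne, hpre⟩ := hsa
    obtain ⟨hd', pr', hhead'', hlast'', hchain', -⟩ := cutseg_facts hseg'
    have hp'mem : p' ∈ σ' := List.mem_of_getLast? hlast'
    have hp'h : p' <+: hd' := prefix_head σ' hchain' hd' hhead'' p' hp'mem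
    have hch' : (prn ++ [mN]) <+: hd' :=
      (h2cpre.trans (hq2 ▸ hpre)).trans hp'h
    have hlen' : hd'.length ∈ SS :=
      ⟨σ', A', hd', hseg', hmeas'.trans h2meas, hhead'', hch', rfl⟩
    have hle : hd'.length ≤ sSup SS := le_csSup hSbdd hlen'
    have hlt : q2.length < p'.length :=
      lt_of_le_of_ne hpre.length_le fun h => hne (hpre.eq_of_length h)
    have h1 : p'.length ≤ hd'.length := hp'h.length_le
    have h2' : q2.length = sSup SS := by rw [hq2, h2len]
    omega
  · -- disjointness from each σs i
    intro i h1i hin x hx1 hx2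
    obtain ⟨hdi, pri, hheadi, hlasti, hchaini, -⟩ := cutseg_facts (htm i h1i hin).1
    -- the RightOf invariant, propagated from i up to n
    have main : ∀ j (hij : i ≤ j), j ≤ n → ∀ b, (σs j).getLast? = some (b ++ [0]) →
        ∀ m, m ≠ 0 → RightOf (b ++ [m]) (pri ++ [0]) := by
      intro j hij
      induction j, hij using Nat.le_induction with
      | base =>
        intro _ b hb m hm
        have hbb : b ++ [(0 : ℕ)] = pri ++ [0] := Option.some.inj (hb.symm.trans hlasti)
        rw [← hbb]
        exact rightOf_base b m hm
      | succ j hij ihj =>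
        intro hj1n b hb m hm
        have hjn : j ≤ n := by omega
        have h1j : 1 ≤ j := le_trans h1i hij
        obtain ⟨hdj, prj, hheadj, hlastj, hchainj, -⟩ := cutseg_facts (htm j h1j hjn).1
        obtain ⟨hdj1, prj1, hheadj1, hlastj1, hchainj1, -⟩ :=
          cutseg_facts (htm (j + 1) (by omega) hj1n).1
        obtain ⟨p0, hp0, hcasesj⟩ := hch j h1j (by omega)
        have hpp0 : p0 = prj ++ [0] := by
          rw [hlastj] at hp0; exact (Option.some.inj hp0).symm
        subst hpp0
        rcases hcasesj with ⟨q, hqmem, hsc⟩ | ⟨q, r, hr, ⟨hqner, hqpre⟩, hsc⟩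
        · obtain ⟨m₀, hm₀, rfl⟩ := sideconn_sibling hsc
          have hro : RightOf (prj ++ [m₀]) (pri ++ [0]) := ihj hjn prj hlastj m₀ hm₀
          exact step_lemma hchainj1 hb (Or.inl hqmem) hro m hm
        · obtain ⟨m₀, hm₀, rfl⟩ := sideconn_sibling hsc
          have hro : RightOf (prj ++ [m₀]) (pri ++ [0]) := ihj hjn prj hlastj m₀ hm₀
          have hrb : r = b ++ [0] := Option.some.inj (hr ▸ hb)
          subst hrb
          exact step_lemma hchainj1 hb (Or.inr ⟨hqner, hqpre⟩) hro m hm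
    have hrov : RightOf (prn ++ [mN]) (pri ++ [0]) := main n hin le_rfl prn hlastn mN hmN
    -- derive the contradiction
    have hvx : (pri ++ [0]) <+: x := getLast_prefix _ hchaini _ hlasti x hx1
    have hxhi : x <+: hdi := prefix_head _ hchaini hdi hheadi x hx1
    have hxh2 : x <+: h2 := prefix_head _ hchain2 h2 (hhead2 ▸ hhead2.symm ▸ h2head) x hx2
    obtain ⟨d, hdu, hdv, hag, hv0, hu0⟩ := hrov
    rcases List.prefix_or_prefix_of_prefix hxh2 h2cpre with hxc | hcx
    · have hvc : (pri ++ [0]) <+: (prn ++ [mN]) := hvx.trans hxc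
      have h0 : (prn ++ [mN]).getD d 0 = (pri ++ [0]).getD d 0 := getD_of_prefix hvc hdv
      rw [hv0] at h0
      exact hu0 h0
    · have hchdi : (prn ++ [mN]) <+: hdi := hcx.trans hxhi
      have h1 : hdi.getD d 0 = (prn ++ [mN]).getD d 0 := getD_of_prefix hchdi hdu
      have h2' : hdi.getD d 0 = (pri ++ [0]).getD d 0 :=
        getD_of_prefix (hvx.trans hxhi) hdv
      rw [hv0] at h2'
      rw [h2'] at h1
      exact hu0 h1.symm

/-- given a non-normal derivation Δ in a system of grounding Σ and a topmost
maximal cut-segment (tmcs) σ¹ of Δ, if there is a cut-segment σ* with μ(σ*) = μ(σ¹) such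
that the lower edge of σ¹ is side-connected either with an occurrence in σ* or with a
formula occurrence standing below the lower edge of σ*, then there is a tmcs σ² of Δ
disjoint from σ¹.  Moreover, if σ¹, ..., σⁿ is a sequence of pairwise disjoint tmcs of Δ
such that each σ^{i+1} stands to σ^i in the above relation, and there is a cut-segment σ**
standing to σⁿ in the above relation, then there is a tmcs σ^{n+1} of Δ disjoint from each
σ^i (1 ≤ i ≤ n). -/
theorem disjoint_tmcs (base : ℕ → LFormula) (R : Set (List GForm × GForm))
    (hR : CharRuleSet R) (Γ : Set GForm) (Δ : PTree)
    (hval : Valid base R Γ Δ) (hnn : NonNormal Δ) :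
    (∀ σ1 A1, IsTmcs Δ σ1 A1 →
      (∃ σs As, IsCutSeg Δ σs As ∧ GForm.meas As = GForm.meas A1 ∧ RightRel Δ σ1 σs) →
      ∃ σ2 A2, IsTmcs Δ σ2 A2 ∧ SegDisjoint σ1 σ2)
    ∧ ∀ (n : ℕ) (σs : ℕ → List Pos) (As : ℕ → GForm), 1 ≤ n →
        (∀ i, 1 ≤ i → i ≤ n → IsTmcs Δ (σs i) (As i)) →
        (∀ i j, 1 ≤ i → i < j → j ≤ n → SegDisjoint (σs i) (σs j)) →
        (∀ i, 1 ≤ i → i < n →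
          GForm.meas (As (i + 1)) = GForm.meas (As i) ∧ RightRel Δ (σs i) (σs (i + 1))) →
        (∃ σx Ax, IsCutSeg Δ σx Ax ∧ GForm.meas Ax = GForm.meas (As n) ∧
          RightRel Δ (σs n) σx) →
        ∃ σn1 An1, IsTmcs Δ σn1 An1 ∧ ∀ i, 1 ≤ i → i ≤ n → SegDisjoint (σs i) σn1 := by
  constructor
  · rintro σ1 A1 h1 ⟨σs', As', hxseg, hxmeas, hxrel⟩
    obtain ⟨σ2, A2, h2, hdisj⟩ := key Δ 1 (fun _ => σ1) (fun _ => A1) le_rfl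
      (fun _ _ _ => h1) (fun i h1i hi1 => absurd h1i (by omega)) σs' As' hxseg hxmeas hxrel
    exact ⟨σ2, A2, h2, hdisj 1 le_rfl le_rfl⟩
  · rintro n σs As hn htm hpair hch ⟨σx, Ax, hxseg, hxmeas, hxrel⟩
    obtain ⟨σ2, A2, h2, hdisj⟩ := key Δ n σs As hn htm (fun i a b => (hch i a b).2)
      σx Ax hxseg hxmeas hxrel
    exact ⟨σ2, A2, h2, hdisj⟩

end

end Grounding
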